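/- arXiv:2201.05808 — 3 statements merged into one kernel-verified Lean document; each statement's English description precedes it below -/
import Mathlib

section
/- For all p ∈ (0,2), x ∈ (0,1): the inequality p³(6+18x) + 2px(4-p²)(5+x) + (1-x)(8-x)(4-p²) < 9p²(1-x) has no solution. -/
theorem stmt_7 (p x : ℝ) (hp : p ∈ Set.Ioo (0:ℝ) 2) (hx : x ∈ Set.Ioo (0:ℝ) 1) :
    ¬ (p^3*(6 + 18*x) + 2*p*x*(4 - p^2)*(5 + x) + (1 - x)*(8 - x)*(4 - p^2)
        < 9*p^2*(1 - x)) := by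
  obtain ⟨hp0, hp2⟩ := hp
  obtain ⟨hx0, hx1⟩ := hx
  nlinarith [sq_nonneg (p-1), sq_nonneg (p+1), sq_nonneg (p*x), sq_nonneg (1-x), mul_pos hp0 hx0, sq_nonneg (p*(1-x)), mul_pos (mul_pos hp0 hp0) hx0, sq_nonneg (2-p), sq_nonneg (p-2*x), sq_nonneg (p*x-1), mul_pos hx0 (sub_pos.2 hx1)]
end

section
/- The polynomial p(16384 - 25600p² + 12944p⁴ - 2048p⁶ - 51p⁸) has exactly one root in the open interval (0,2), located approximately at p ≈ 1.20671. -/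
lemma q_pos_aux (t : ℝ) (h0 : 0 < t) (h1 : t ≤ 1.44) :
    0 < 16384 - 25600*t + 12944*t^2 - 2048*t^3 - 51*t^4 := by
  nlinarith [sq_nonneg (t - 1.44), sq_nonneg (t - 1.2), sq_nonneg t,
    mul_nonneg (sub_nonneg.2 h1) h0.le, sq_nonneg (t-1),
    mul_nonneg (mul_nonneg (sub_nonneg.2 h1) h0.le) h0.le]

lemma q_neg_aux1 (t : ℝ) (h0 : 1.47 ≤ t) (h1 : t ≤ 2) :
    16384 - 25600*t + 12944*t^2 - 2048*t^3 - 51*t^4 < 0 := by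
  nlinarith [sq_nonneg (t - 1.47), sq_nonneg (t - 2), sq_nonneg (t-1.7),
    mul_nonneg (sub_nonneg.2 h0) (sub_nonneg.2 h1), sq_nonneg t,
    mul_nonneg (mul_nonneg (sub_nonneg.2 h0) (sub_nonneg.2 h1)) (sub_nonneg.2 h1)]

lemma q_neg_aux2 (t : ℝ) (h0 : 2 ≤ t) (h1 : t ≤ 4) :
    16384 - 25600*t + 12944*t^2 - 2048*t^3 - 51*t^4 < 0 := by
  nlinarith [mul_nonneg (sub_nonneg.2 h0) (sub_nonneg.2 h1), sq_nonneg (t-3),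
    mul_nonneg (mul_nonneg (sub_nonneg.2 h0) (sub_nonneg.2 h1)) (sub_nonneg.2 h1),
    mul_nonneg (mul_nonneg (sub_nonneg.2 h0) (sub_nonneg.2 h1)) (sub_nonneg.2 h0)]

lemma q_root_loc (t : ℝ) (h0 : 0 < t) (h4 : t < 4)
    (hq : 16384 - 25600*t + 12944*t^2 - 2048*t^3 - 51*t^4 = 0) :
    1.44 ≤ t ∧ t ≤ 1.47 := by
  constructor
  · by_contra h
    push_neg at h
    have := q_pos_aux t h0 h.le
    linarith
  · by_contra h
    push_neg at h
    rcases le_or_gt t 2 with h2 | h2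
    · have := q_neg_aux1 t h.le h2
      linarith
    · have := q_neg_aux2 t h2.le h4.le
      linarith

lemma q_root_unique (s t : ℝ) (hs0 : 1.44 ≤ s) (hs1 : s ≤ 1.47) (ht0 : 1.44 ≤ t) (ht1 : t ≤ 1.47)
    (hqs : 16384 - 25600*s + 12944*s^2 - 2048*s^3 - 51*s^4 = 0)
    (hqt : 16384 - 25600*t + 12944*t^2 - 2048*t^3 - 51*t^4 = 0) : s = t := by
  have key : (s - t) * (-25600 + 12944*(s+t) - 2048*(s^2+s*t+t^2)
      - 51*(s^3+s^2*t+s*t^2+t^3)) = 0 := by nlinarith [hqs, hqt]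
  have hP : (-25600 + 12944*(s+t) - 2048*(s^2+s*t+t^2)
      - 51*(s^3+s^2*t+s*t^2+t^3)) < 0 := by nlinarith [sq_nonneg (s-t), sq_nonneg (s+t)]
  rcases mul_eq_zero.1 key with h | h
  · linarith
  · exact absurd h (ne_of_lt hP)

theorem stmt_10 :
    ∃ p₀ : ℝ, p₀ ∈ Set.Ioo (0:ℝ) 2 ∧
      p₀ * (16384 - 25600*p₀^2 + 12944*p₀^4 - 2048*p₀^6 - 51*p₀^8) = 0 ∧
      |p₀ - 1.20671| < 0.001 ∧
      ∀ p ∈ Set.Ioo (0:ℝ) 2,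
        p * (16384 - 25600*p^2 + 12944*p^4 - 2048*p^6 - 51*p^8) = 0 → p = p₀ := by
  set f : ℝ → ℝ := fun p => p * (16384 - 25600*p^2 + 12944*p^4 - 2048*p^6 - 51*p^8) with hf
  have hcont : ContinuousOn f (Set.Icc (1.206:ℝ) 1.2075) := by
    apply Continuous.continuousOn
    continuity
  have hab : (1.206:ℝ) ≤ 1.2075 := by norm_num
  have hmem : (0:ℝ) ∈ Set.Icc (f 1.2075) (f 1.206) := by
    constructor <;> · simp only [hf]; norm_num
  obtain ⟨p₀, hp₀mem, hfp₀⟩ := intermediate_value_Icc' hab hcont hmem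
  obtain ⟨hp₀1, hp₀2⟩ := hp₀mem
  refine ⟨p₀, ⟨by linarith, by linarith⟩, hfp₀, ?_, ?_⟩
  · rw [abs_sub_lt_iff]
    constructor <;> norm_num <;> linarith
  · intro p hp hfp
    have hp0 : (0:ℝ) < p := hp.1
    have hp2 : p < 2 := hp.2
    have hp₀0 : (0:ℝ) < p₀ := by linarith
    -- brackets are zero
    have hbp : 16384 - 25600*p^2 + 12944*p^4 - 2048*p^6 - 51*p^8 = 0 := by
      rcases mul_eq_zero.1 hfp with h | h
      · exact absurd h (ne_of_gt hp0)
      · exact h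
    have hbp₀ : 16384 - 25600*p₀^2 + 12944*p₀^4 - 2048*p₀^6 - 51*p₀^8 = 0 := by
      rcases mul_eq_zero.1 hfp₀ with h | h
      · exact absurd h (ne_of_gt hp₀0)
      · exact h
    have hqp : 16384 - 25600*(p^2) + 12944*(p^2)^2 - 2048*(p^2)^3 - 51*(p^2)^4 = 0 := by
      linear_combination hbp
    have hqp₀ : 16384 - 25600*(p₀^2) + 12944*(p₀^2)^2 - 2048*(p₀^2)^3 - 51*(p₀^2)^4 = 0 := by
      linear_combination hbp₀
    have hloc : 1.44 ≤ p^2 ∧ p^2 ≤ 1.47 :=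
      q_root_loc _ (by positivity) (by nlinarith) hqp
    have hloc₀ : 1.44 ≤ p₀^2 ∧ p₀^2 ≤ 1.47 :=
      q_root_loc _ (by positivity) (by nlinarith) hqp₀
    have heq : p^2 = p₀^2 :=
      q_root_unique _ _ hloc.1 hloc.2 hloc₀.1 hloc₀.2 hqp hqp₀
    have : (p - p₀) * (p + p₀) = 0 := by linear_combination heq
    rcases mul_eq_zero.1 this with h | h
    · linarith
    · linarith
end

section
/- For every q ∈ (0,1) and x ∈ [0,1], 262144(1-x²)((1+q²)(1+q)² + q²x²) + 32768x³(5-q)(1+q+q²)² is a decreasing function of x on [0,1], and its maximum value 262144(1+q²)(1+q)² is attained at x = 0. -/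
theorem stmt_16 (q : ℝ) (hq : q ∈ Set.Ioo (0:ℝ) 1)
    (f : ℝ → ℝ)
    (hf : ∀ x, f x = 262144 * (1 - x^2) * ((1 + q^2)*(1 + q)^2 + q^2*x^2)
      + 32768 * x^3 * (5 - q) * (1 + q + q^2)^2) :
    AntitoneOn f (Set.Icc 0 1) ∧ IsMaxOn f (Set.Icc 0 1) 0 ∧
    f 0 = 262144 * (1 + q^2) * (1 + q)^2 := by
  obtain ⟨hq0, hq1⟩ := hq
  -- pure-q facts
  have h1 : 0 ≤ (5-q)*(1+q+q^2)^2 - 32*q^2 := by nlinarith [sq_nonneg (1-q), sq_nonneg q, mul_pos hq0 hq0, sq_nonneg (q*(1-q))]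
  have hg1 : 0 ≤ 16*((1+q^2)*(1+q)^2) + 16*q^2 - 3*(5-q)*(1+q+q^2)^2 := by
    nlinarith [sq_nonneg (1-q), sq_nonneg q, mul_pos hq0 hq0, sq_nonneg (q*(1-q)), mul_nonneg (mul_nonneg hq0.le hq0.le) hq0.le]
  have hslope : 0 ≤ 3*(5-q)*(1+q+q^2)^2 - 64*q^2 := by
    nlinarith [sq_nonneg (1-q), sq_nonneg q, mul_pos hq0 hq0, sq_nonneg (q*(1-q))]
  -- g(x) ≥ 0 on [0,1]
  have hg : ∀ x : ℝ, 0 ≤ x → x ≤ 1 →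
      0 ≤ 16*((1+q^2)*(1+q)^2 - q^2) + 32*q^2*x^2 - 3*x*(5-q)*(1+q+q^2)^2 := by
    intro x hx0 hx1
    nlinarith [mul_nonneg (sub_nonneg.2 hx1) hslope, sq_nonneg (x-1), mul_nonneg (mul_nonneg hq0.le hq0.le) (sq_nonneg (x-1)), hg1]
  have key : ∀ a ∈ Set.Icc (0:ℝ) 1, ∀ b ∈ Set.Icc (0:ℝ) 1, a ≤ b → f b ≤ f a := by
    intro a ⟨ha0, ha1⟩ b ⟨hb0, hb1⟩ hab
    rw [hf, hf]
    have hP : 0 ≤ 8*(a+b)*((1+q^2)*(1+q)^2 - q^2) + 8*q^2*(a+b)*(a^2+b^2)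
        - (a^2+a*b+b^2)*(5-q)*(1+q+q^2)^2 := by
      nlinarith [mul_nonneg ha0 (hg a ha0 ha1), mul_nonneg hb0 (hg b hb0 hb1),
        mul_nonneg (sq_nonneg (a-b)) h1,
        mul_nonneg (mul_nonneg (mul_nonneg hq0.le hq0.le) (sq_nonneg (a-b))) (by linarith : (0:ℝ) ≤ 2 - (a+b))]
    nlinarith [mul_nonneg (sub_nonneg.2 hab) hP]
  refine ⟨fun a ha b hb hab => key a ha b hb hab, fun x hx => key 0 (by norm_num) x hx hx.1, by rw [hf]; ring⟩
end
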